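/- arXiv:2406.10772 — 3 statements merged into one kernel-verified Lean document; each statement's English description precedes it below -/
import Mathlib

section
/- Let p ∈ (0,1), λ = min(p, 1−p), let q ≥ 2 be real, and set γ = √(λ/(1−λ)) / √(q−1). Then for every f : {−1,1}^n → ℝ, under the p-biased measure μ one has ‖T_γ f‖_q ≤ ‖f‖₂. -/
open Filter Function Real

noncomputable def pwt (p : ℝ) {n : ℕ} (x : Fin n → Bool) : ℝ :=
  ∏ i, if x i then p else 1 - p

noncomputable def pE (p : ℝ) {n : ℕ} (f : (Fin n → Bool) → ℝ) : ℝ :=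
  ∑ x, pwt p x * f x

noncomputable def pNorm (p q : ℝ) {n : ℕ} (f : (Fin n → Bool) → ℝ) : ℝ :=
  (pE p fun x => |f x| ^ q) ^ (1 / q)

noncomputable def pVar (p : ℝ) {n : ℕ} (f : (Fin n → Bool) → ℝ) : ℝ :=
  pE p (fun x => f x ^ 2) - (pE p f) ^ 2

noncomputable def condE (p : ℝ) {n : ℕ} (i : Fin n) (f : (Fin n → Bool) → ℝ) :
    (Fin n → Bool) → ℝ :=
  fun x => (1 - p) * f (Function.update x i false) + p * f (Function.update x i true)

noncomputable def chi (p : ℝ) {n : ℕ} (S : Finset (Fin n)) (x : Fin n → Bool) : ℝ :=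
  ∏ i ∈ S, ((if x i then (1:ℝ) else -1) - (2 * p - 1)) / (2 * Real.sqrt (p * (1 - p)))

noncomputable def fhat (p : ℝ) {n : ℕ} (f : (Fin n → Bool) → ℝ) (S : Finset (Fin n)) : ℝ :=
  pE p fun x => f x * chi p S x

noncomputable def noiseOp (p δ : ℝ) {n : ℕ} (f : (Fin n → Bool) → ℝ) :
    (Fin n → Bool) → ℝ :=
  fun x => ∑ S : Finset (Fin n), δ ^ S.card * fhat p f S * chi p S x

section Analytic

/-- Two-point Jensen for `rpow`. -/
lemma jensen2 {z : ℝ} (hz : 1 ≤ z) {a b A B : ℝ} (ha : 0 ≤ a) (hb : 0 ≤ b)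
    (hab : a + b = 1) (hA : 0 ≤ A) (hB : 0 ≤ B) :
    (a * A + b * B) ^ z ≤ a * A ^ z + b * B ^ z := by
  have h := (convexOn_rpow hz).2 (Set.mem_Ici.2 hA) (Set.mem_Ici.2 hB) ha hb hab
  simpa [smul_eq_mul] using h

/-- Power mean comparison needed for the second-derivative bound. -/
lemma powermean {q : ℝ} (hq : 2 ≤ q) {A B : ℝ} (hA : 0 ≤ A) (hB : 0 ≤ B) :
    (A ^ (q - 2) + B ^ (q - 2)) / 2 ≤ ((A ^ q + B ^ q) / 2) ^ (1 - 2 / q) := by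
  rcases eq_or_lt_of_le hq with h2 | h2
  · simp [← h2]
  · have hq0 : (0:ℝ) < q := by linarith
    have hq2 : (0:ℝ) < q - 2 := by linarith
    set s : ℝ := q / (q - 2) with hs
    have hs1 : 1 ≤ s := by
      rw [hs, le_div_iff₀ hq2]; linarith
    have hApow : 0 ≤ A ^ (q-2) := Real.rpow_nonneg hA _
    have hBpow : 0 ≤ B ^ (q-2) := Real.rpow_nonneg hB _
    have key : ((A ^ (q-2) + B ^ (q-2)) / 2) ^ s ≤ (A ^ q + B ^ q) / 2 := by
      have h := jensen2 hs1 (by norm_num : (0:ℝ) ≤ 1/2) (by norm_num : (0:ℝ) ≤ 1/2)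
        (by norm_num) hApow hBpow
      have hA' : (A ^ (q-2)) ^ s = A ^ q := by
        rw [← Real.rpow_mul hA]
        congr 1
        rw [hs]; field_simp
      have hB' : (B ^ (q-2)) ^ s = B ^ q := by
        rw [← Real.rpow_mul hB]
        congr 1
        rw [hs]; field_simp
      calc ((A ^ (q-2) + B ^ (q-2)) / 2) ^ s
          = (1/2 * A ^ (q-2) + 1/2 * B ^ (q-2)) ^ s := by ring_nf
        _ ≤ 1/2 * (A ^ (q-2)) ^ s + 1/2 * (B ^ (q-2)) ^ s := h
        _ = (A ^ q + B ^ q) / 2 := by rw [hA', hB']; ring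
    have hX : 0 ≤ (A ^ (q-2) + B ^ (q-2)) / 2 := by positivity
    have hss : (1 - 2/q) = 1/s := by
      rw [hs]; field_simp
    rw [hss]
    calc (A ^ (q-2) + B ^ (q-2)) / 2
        = (((A ^ (q-2) + B ^ (q-2)) / 2) ^ s) ^ (1/s) := by
          rw [← Real.rpow_mul hX, mul_one_div, div_self (by linarith : s ≠ 0), Real.rpow_one]
      _ ≤ ((A ^ q + B ^ q) / 2) ^ (1/s) :=
          Real.rpow_le_rpow (Real.rpow_nonneg hX _) key (by positivity)

end Analytic

noncomputable def Gf (q d : ℝ) : ℝ := ((1+d)^q + (1-d)^q)/2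
noncomputable def Mf (q d : ℝ) : ℝ := (1+d)^(q-1) - (1-d)^(q-1)
noncomputable def gf (q d : ℝ) : ℝ := (Gf q d)^(2/q)
noncomputable def g1f (q d : ℝ) : ℝ := (Gf q d)^(2/q-1) * Mf q d
noncomputable def g2f (q d : ℝ) : ℝ :=
  ((q/2 * Mf q d) * (2/q-1) * (Gf q d)^(2/q-1-1)) * (Mf q d)
    + (Gf q d)^(2/q-1) * ((q-1)*(1+d)^(q-1-1) + (q-1)*(1-d)^(q-1-1))

section D2sec

variable {q : ℝ} (hq : 2 ≤ q)

include hq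

lemma Gf_pos {d : ℝ} (hd : d ∈ Set.Icc (0:ℝ) 1) : 0 < Gf q d := by
  have h1 : (1:ℝ) ≤ (1+d)^q := Real.one_le_rpow (by linarith [hd.1]) (by linarith)
  have h2 : (0:ℝ) ≤ (1-d)^q := Real.rpow_nonneg (by linarith [hd.2]) _
  unfold Gf; linarith

lemma hG_deriv (d : ℝ) : HasDerivAt (Gf q) (q/2 * Mf q d) d := by
  have h1 : HasDerivAt (fun x : ℝ => 1+x) 1 d := (hasDerivAt_id d).const_add 1
  have h2 : HasDerivAt (fun x : ℝ => 1-x) (-1) d := (hasDerivAt_id d).const_sub 1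
  have hA := h1.rpow_const (Or.inr (by linarith : (1:ℝ) ≤ q))
  have hB := h2.rpow_const (Or.inr (by linarith : (1:ℝ) ≤ q))
  have := (hA.add hB).div_const 2
  refine this.congr_deriv ?_
  unfold Mf; ring

lemma hM_deriv (d : ℝ) :
    HasDerivAt (Mf q) ((q-1)*(1+d)^(q-1-1) + (q-1)*(1-d)^(q-1-1)) d := by
  have h1 : HasDerivAt (fun x : ℝ => 1+x) 1 d := (hasDerivAt_id d).const_add 1
  have h2 : HasDerivAt (fun x : ℝ => 1-x) (-1) d := (hasDerivAt_id d).const_sub 1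
  have hA := h1.rpow_const (p := q-1) (Or.inr (by linarith : (1:ℝ) ≤ q - 1))
  have hB := h2.rpow_const (p := q-1) (Or.inr (by linarith : (1:ℝ) ≤ q - 1))
  have := hA.sub hB
  refine this.congr_deriv ?_
  ring

lemma hg_deriv {d : ℝ} (hG : 0 < Gf q d) : HasDerivAt (gf q) (g1f q d) d := by
  have := (hG_deriv hq d).rpow_const (p := 2/q) (Or.inl (ne_of_gt hG))
  refine this.congr_deriv ?_
  unfold g1f
  have hqne : q ≠ 0 := by linarith
  field_simp

lemma hg1_deriv {d : ℝ} (hG : 0 < Gf q d) : HasDerivAt (g1f q) (g2f q d) d := by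
  have h1 := ((hG_deriv hq d).rpow_const (p := 2/q-1) (Or.inl (ne_of_gt hG))).mul
    (hM_deriv hq d)
  exact h1

lemma g2_bound {d : ℝ} (hd : d ∈ Set.Icc (0:ℝ) 1) : g2f q d ≤ 2*(q-1) := by
  have hG : 0 < Gf q d := Gf_pos hq hd
  have hA : (0:ℝ) ≤ 1 + d := by linarith [hd.1]
  have hB : (0:ℝ) ≤ 1 - d := by linarith [hd.2]
  have hterm1 : ((q/2 * Mf q d) * (2/q-1) * (Gf q d)^(2/q-1-1)) * (Mf q d) ≤ 0 := by
    have h1 : 2/q - 1 ≤ 0 := by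
      have : 2/q ≤ 1 := by
        rw [div_le_one (by linarith : (0:ℝ) < q)]; linarith
      linarith
    have h2 : (0:ℝ) ≤ (Gf q d)^(2/q-1-1) := Real.rpow_nonneg (le_of_lt hG) _
    have h3 : (0:ℝ) ≤ (Mf q d)^2 := sq_nonneg _
    have : ((q/2 * Mf q d) * (2/q-1) * (Gf q d)^(2/q-1-1)) * (Mf q d)
        = (q/2) * (2/q-1) * ((Gf q d)^(2/q-1-1) * (Mf q d)^2) := by ring
    rw [this]
    apply mul_nonpos_of_nonpos_of_nonneg
    · apply mul_nonpos_of_nonneg_of_nonpos (by linarith) h1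
    · positivity
  have hterm2 : (Gf q d)^(2/q-1) * ((q-1)*(1+d)^(q-1-1) + (q-1)*(1-d)^(q-1-1))
      ≤ 2*(q-1) := by
    have hpm := powermean hq hA hB
    have he : q - 1 - 1 = q - 2 := by ring
    rw [he]
    have hGc : (0:ℝ) ≤ (Gf q d)^(2/q-1) := Real.rpow_nonneg (le_of_lt hG) _
    have hkey : (Gf q d)^(2/q-1) * (((1+d)^(q-2) + (1-d)^(q-2))/2) ≤ 1 := by
      calc (Gf q d)^(2/q-1) * (((1+d)^(q-2) + (1-d)^(q-2))/2)
          ≤ (Gf q d)^(2/q-1) * (((1+d)^q + (1-d)^q)/2)^(1-2/q) := by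
            apply mul_le_mul_of_nonneg_left hpm hGc
        _ = (Gf q d)^(2/q-1) * (Gf q d)^(1-2/q) := rfl
        _ = (Gf q d)^(2/q-1+(1-2/q)) := (Real.rpow_add hG _ _).symm
        _ = 1 := by norm_num
    have h2 : (q-1)*(1+d)^(q-2) + (q-1)*(1-d)^(q-2)
        = 2*(q-1) * (((1+d)^(q-2) + (1-d)^(q-2))/2) := by ring
    calc (Gf q d)^(2/q-1) * ((q-1)*(1+d)^(q-2) + (q-1)*(1-d)^(q-2))
        = 2*(q-1) * ((Gf q d)^(2/q-1) * (((1+d)^(q-2) + (1-d)^(q-2))/2)) := by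
          rw [h2]; ring
      _ ≤ 2*(q-1) * 1 := by
          apply mul_le_mul_of_nonneg_left hkey (by linarith)
      _ = 2*(q-1) := by ring
  unfold g2f
  linarith

lemma D2core {d : ℝ} (hd : d ∈ Set.Icc (0:ℝ) 1) :
    ((1+d)^q + (1-d)^q)/2 ≤ (1+(q-1)*d^2)^(q/2) := by
  classical
  -- φ1 := 2(q-1)d - g1f, monotone on Icc
  set φ1 : ℝ → ℝ := fun d => 2*(q-1)*d - g1f q d with hφ1
  have hφ1der : ∀ x ∈ Set.Icc (0:ℝ) 1, HasDerivAt φ1 (2*(q-1) - g2f q x) x := by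
    intro x hx
    have h1 : HasDerivAt (fun x : ℝ => 2*(q-1)*x) (2*(q-1)) x := by
      simpa using (hasDerivAt_id x).const_mul (2*(q-1))
    exact h1.sub (hg1_deriv hq (Gf_pos hq hx))
  have hmono1 : MonotoneOn φ1 (Set.Icc (0:ℝ) 1) := by
    apply monotoneOn_of_deriv_nonneg (convex_Icc 0 1)
    · exact fun x hx => (hφ1der x hx).continuousAt.continuousWithinAt
    · intro x hx
      rw [interior_Icc] at hx
      exact (hφ1der x (Set.mem_Icc_of_Ioo hx)).differentiableAt.differentiableWithinAt
    · intro x hx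
      rw [interior_Icc] at hx
      rw [(hφ1der x (Set.mem_Icc_of_Ioo hx)).deriv]
      have := g2_bound hq (Set.mem_Icc_of_Ioo hx)
      linarith
  have hφ1zero : φ1 0 = 0 := by
    have hM0 : Mf q 0 = 0 := by
      unfold Mf; norm_num
    simp [hφ1, g1f, hM0]
  have hφ1nonneg : ∀ x ∈ Set.Icc (0:ℝ) 1, 0 ≤ φ1 x := by
    intro x hx
    have := hmono1 (Set.left_mem_Icc.2 (by norm_num)) hx hx.1
    rw [hφ1zero] at this
    exact this
  -- φ := 1 + (q-1)d² - gf, monotone on Icc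
  set φ : ℝ → ℝ := fun d => 1 + (q-1)*d^2 - gf q d with hφ
  have hφder : ∀ x ∈ Set.Icc (0:ℝ) 1, HasDerivAt φ (φ1 x) x := by
    intro x hx
    have h1 : HasDerivAt (fun x : ℝ => 1 + (q-1)*x^2) (2*(q-1)*x) x := by
      have := ((hasDerivAt_pow 2 x).const_mul (q-1)).const_add 1
      refine this.congr_deriv ?_
      rw [show (2:ℕ) - 1 = 1 from rfl]; push_cast; ring
    exact h1.sub (hg_deriv hq (Gf_pos hq hx))
  have hmono : MonotoneOn φ (Set.Icc (0:ℝ) 1) := by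
    apply monotoneOn_of_deriv_nonneg (convex_Icc 0 1)
    · exact fun x hx => (hφder x hx).continuousAt.continuousWithinAt
    · intro x hx
      rw [interior_Icc] at hx
      exact (hφder x (Set.mem_Icc_of_Ioo hx)).differentiableAt.differentiableWithinAt
    · intro x hx
      rw [interior_Icc] at hx
      rw [(hφder x (Set.mem_Icc_of_Ioo hx)).deriv]
      exact hφ1nonneg x (Set.mem_Icc_of_Ioo hx)
  have hφzero : φ 0 = 0 := by
    have : Gf q 0 = 1 := by unfold Gf; norm_num
    simp [hφ, gf, this]
  have hφx : 0 ≤ φ d := by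
    have := hmono (Set.left_mem_Icc.2 (by norm_num)) hd hd.1
    rw [hφzero] at this
    exact this
  have hgle : gf q d ≤ 1 + (q-1)*d^2 := by
    simp only [hφ] at hφx; linarith
  have hGnn : 0 ≤ Gf q d := le_of_lt (Gf_pos hq hd)
  have hGeq : Gf q d = (gf q d)^(q/2) := by
    unfold gf
    rw [← Real.rpow_mul hGnn]
    have hqne : q ≠ 0 := by linarith
    rw [show 2/q*(q/2) = 1 by field_simp, Real.rpow_one]
  have : Gf q d ≤ (1+(q-1)*d^2)^(q/2) := by
    rw [hGeq]
    exact Real.rpow_le_rpow (Real.rpow_nonneg hGnn _) hgle (by positivity)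
  exact this

end D2sec

section D2full

variable {q : ℝ}

lemma D2nn (hq : 2 ≤ q) {a d : ℝ} (ha : 0 ≤ a) (hd : 0 ≤ d) (hda : d ≤ a) :
    ((a-d)^q + (a+d)^q)/2 ≤ (a^2 + (q-1)*d^2)^(q/2) := by
  have hqne : q ≠ 0 := by linarith
  rcases eq_or_lt_of_le ha with h0 | h0
  · have hd0 : d = 0 := le_antisymm (by linarith) hd
    rw [← h0, hd0]
    rw [show ((0:ℝ)-0) = 0 by ring, show ((0:ℝ)+0) = 0 by ring, Real.zero_rpow hqne,
      show ((0:ℝ)^2 + (q-1)*0^2) = 0 by ring, Real.zero_rpow (by positivity : q/2 ≠ 0)]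
    norm_num
  · set t : ℝ := d / a with ht
    have ht0 : 0 ≤ t := by positivity
    have ht1 : t ≤ 1 := by rw [ht, div_le_one h0]; exact hda
    have hcore := D2core hq (Set.mem_Icc.2 ⟨ht0, ht1⟩)
    have haq : (0:ℝ) < a^q := Real.rpow_pos_of_pos h0 q
    have h1 : a^q * ((1+t)^q) = (a+d)^q := by
      rw [← Real.mul_rpow (le_of_lt h0) (by linarith : (0:ℝ) ≤ 1 + t)]
      congr 1
      rw [ht]
      field_simp
    have h2 : a^q * ((1-t)^q) = (a-d)^q := by
      rw [← Real.mul_rpow (le_of_lt h0) (by linarith : (0:ℝ) ≤ 1 - t)]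
      congr 1
      rw [ht]
      field_simp
    have h3 : a^q * (1+(q-1)*t^2)^(q/2) = (a^2+(q-1)*d^2)^(q/2) := by
      have haq2 : a^q = (a^2 : ℝ)^(q/2) := by
        rw [← Real.rpow_natCast a 2, ← Real.rpow_mul (le_of_lt h0)]
        congr 1
        push_cast
        ring
      rw [haq2, ← Real.mul_rpow (by positivity) (by nlinarith : (0:ℝ) ≤ 1+(q-1)*t^2)]
      congr 2
      rw [ht]
      field_simp
    calc ((a-d)^q + (a+d)^q)/2 = a^q * (((1+t)^q + (1-t)^q)/2) := by
          rw [← h1, ← h2]; ring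
      _ ≤ a^q * (1+(q-1)*t^2)^(q/2) := by
          apply mul_le_mul_of_nonneg_left hcore (le_of_lt haq)
      _ = (a^2+(q-1)*d^2)^(q/2) := h3

lemma D2nn' (hq : 2 ≤ q) {a d : ℝ} (ha : 0 ≤ a) (hd : 0 ≤ d) :
    (|a-d|^q + |a+d|^q)/2 ≤ (a^2 + (q-1)*d^2)^(q/2) := by
  rcases le_total d a with h | h
  · rw [abs_of_nonneg (by linarith : (0:ℝ) ≤ a - d), abs_of_nonneg (by linarith : (0:ℝ) ≤ a + d)]
    exact D2nn hq ha hd h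
  · rw [abs_of_nonpos (by linarith : a - d ≤ 0), abs_of_nonneg (by linarith : (0:ℝ) ≤ a + d)]
    rw [show -(a-d) = d - a by ring, show a + d = d + a by ring]
    have h1 : ((d-a)^q + (d+a)^q)/2 ≤ (d^2 + (q-1)*a^2)^(q/2) := D2nn hq hd ha h
    have hd2a2 : (0:ℝ) ≤ d^2 - a^2 := by nlinarith
    have h2 : (d^2 + (q-1)*a^2)^(q/2) ≤ (a^2 + (q-1)*d^2)^(q/2) :=
      Real.rpow_le_rpow (by nlinarith [sq_nonneg d, sq_nonneg a])
        (by nlinarith [mul_nonneg (by linarith : (0:ℝ) ≤ q-2) hd2a2]) (by positivity)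
    linarith

lemma D2 (hq : 2 ≤ q) (a d : ℝ) :
    (|a-d|^q + |a+d|^q)/2 ≤ (a^2 + (q-1)*d^2)^(q/2) := by
  have key := D2nn' hq (abs_nonneg a) (abs_nonneg d)
  rw [sq_abs, sq_abs] at key
  have hpair : |a-d|^q + |a+d|^q = abs (|a| - |d|)^q + abs (|a| + |d|)^q := by
    rcases le_or_gt 0 a with h₁ | h₁ <;> rcases le_or_gt 0 d with h₂ | h₂
    · rw [abs_of_nonneg h₁, abs_of_nonneg h₂]
    · rw [abs_of_nonneg h₁, abs_of_neg h₂, show a - -d = a + d by ring,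
        show a + -d = a - d by ring]
      exact add_comm _ _
    · rw [abs_of_neg h₁, abs_of_nonneg h₂, show -a - d = -(a+d) by ring,
        show -a + d = -(a-d) by ring, abs_neg, abs_neg]
      exact add_comm _ _
    · rw [abs_of_neg h₁, abs_of_neg h₂, show -a - -d = -(a-d) by ring,
        show -a + -d = -(a+d) by ring, abs_neg, abs_neg]
  rw [hpair]
  exact key

end D2full

section OnebitMink

/-- The one-bit hypercontractive inequality, asymmetric version via convexity. -/
lemma onebit {q : ℝ} (hq : 2 ≤ q) {u : ℝ} (hu : 0 < u) (hu2 : (q-1)*u^2 = 1)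
    {w₀ w₁ x₀ x₁ : ℝ} (hw₀ : 0 ≤ w₀) (hw₁ : 0 ≤ w₁) (hw : w₀ + w₁ = 1)
    (hx₀ : -u ≤ x₀) (hx₀' : x₀ ≤ u) (hx₁ : -u ≤ x₁) (hx₁' : x₁ ≤ u)
    (hmean : w₀*x₀ + w₁*x₁ = 0) (α β : ℝ) :
    w₀ * |α + x₀*β|^q + w₁ * |α + x₁*β|^q ≤ (α^2 + β^2)^(q/2) := by
  set A : ℝ := |α - u*β| with hA
  set B : ℝ := |α + u*β| with hB
  have chord : ∀ x : ℝ, -u ≤ x → x ≤ u →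
      |α + x*β|^q ≤ (u-x)/(2*u) * A^q + (x+u)/(2*u) * B^q := by
    intro x hxl hxr
    have ha : (0:ℝ) ≤ (u-x)/(2*u) := div_nonneg (by linarith) (by linarith)
    have hb : (0:ℝ) ≤ (x+u)/(2*u) := div_nonneg (by linarith) (by linarith)
    have hab : (u-x)/(2*u) + (x+u)/(2*u) = 1 := by field_simp; ring
    have hdec : α + x*β = (u-x)/(2*u) * (α - u*β) + (x+u)/(2*u) * (α + u*β) := by
      field_simp
      ring
    have htri : |α + x*β| ≤ (u-x)/(2*u) * A + (x+u)/(2*u) * B := by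
      rw [hdec]
      calc |(u-x)/(2*u) * (α - u*β) + (x+u)/(2*u) * (α + u*β)|
          ≤ |(u-x)/(2*u) * (α - u*β)| + |(x+u)/(2*u) * (α + u*β)| := abs_add_le _ _
        _ = (u-x)/(2*u) * A + (x+u)/(2*u) * B := by
            rw [abs_mul, abs_mul, abs_of_nonneg ha, abs_of_nonneg hb]
    calc |α + x*β|^q ≤ ((u-x)/(2*u) * A + (x+u)/(2*u) * B)^q :=
          Real.rpow_le_rpow (abs_nonneg _) htri (by linarith)
      _ ≤ (u-x)/(2*u) * A^q + (x+u)/(2*u) * B^q :=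
          jensen2 (by linarith) ha hb hab (abs_nonneg _) (abs_nonneg _)
  have h₀ := chord x₀ hx₀ hx₀'
  have h₁ := chord x₁ hx₁ hx₁'
  have hcoef : w₀ * ((u-x₀)/(2*u)) + w₁ * ((u-x₁)/(2*u)) = 1/2 := by
    field_simp
    nlinarith [hmean, hw]
  have hcoef' : w₀ * ((x₀+u)/(2*u)) + w₁ * ((x₁+u)/(2*u)) = 1/2 := by
    field_simp
    nlinarith [hmean, hw]
  have hAq : (0:ℝ) ≤ A^q := Real.rpow_nonneg (abs_nonneg _) _
  have hBq : (0:ℝ) ≤ B^q := Real.rpow_nonneg (abs_nonneg _) _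
  have step1 : w₀ * |α + x₀*β|^q + w₁ * |α + x₁*β|^q ≤ (A^q + B^q)/2 := by
    calc w₀ * |α + x₀*β|^q + w₁ * |α + x₁*β|^q
        ≤ w₀ * ((u-x₀)/(2*u) * A^q + (x₀+u)/(2*u) * B^q)
          + w₁ * ((u-x₁)/(2*u) * A^q + (x₁+u)/(2*u) * B^q) := by
          apply add_le_add (mul_le_mul_of_nonneg_left h₀ hw₀) (mul_le_mul_of_nonneg_left h₁ hw₁)
      _ = (w₀ * ((u-x₀)/(2*u)) + w₁ * ((u-x₁)/(2*u))) * A^q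
          + (w₀ * ((x₀+u)/(2*u)) + w₁ * ((x₁+u)/(2*u))) * B^q := by ring
      _ = (A^q + B^q)/2 := by rw [hcoef, hcoef']; ring
  have step2 : (A^q + B^q)/2 ≤ (α^2 + β^2)^(q/2) := by
    have := D2 hq α (u*β)
    have he : α^2 + (q-1)*(u*β)^2 = α^2 + β^2 := by nlinarith [hu2]
    rw [he] at this
    exact this
  linarith

/-- Two-point weighted Minkowski inequality. -/
lemma mink2 {r : ℝ} (hr : 1 ≤ r) {w₀ w₁ x₀ x₁ y₀ y₁ : ℝ}
    (hw₀ : 0 ≤ w₀) (hw₁ : 0 ≤ w₁) (hx₀ : 0 ≤ x₀) (hx₁ : 0 ≤ x₁)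
    (hy₀ : 0 ≤ y₀) (hy₁ : 0 ≤ y₁) :
    (w₀*(x₀+y₀)^r + w₁*(x₁+y₁)^r)^(1/r)
      ≤ (w₀*x₀^r + w₁*x₁^r)^(1/r) + (w₀*y₀^r + w₁*y₁^r)^(1/r) := by
  have hr0 : (0:ℝ) < r := by linarith
  set f : Bool → ℝ := fun b => (cond b w₁ w₀)^(1/r) * (cond b x₁ x₀) with hf
  set g : Bool → ℝ := fun b => (cond b w₁ w₀)^(1/r) * (cond b y₁ y₀) with hg
  have key := Real.Lp_add_le Finset.univ f g hr
  have habs : ∀ (w z : ℝ), 0 ≤ w → 0 ≤ z → |w^(1/r) * z|^r = w * z^r := by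
    intro w z hwn hzn
    rw [abs_of_nonneg (by positivity), Real.mul_rpow (Real.rpow_nonneg hwn _) hzn,
      ← Real.rpow_mul hwn, one_div, inv_mul_cancel₀ (ne_of_gt hr0), Real.rpow_one]
  have e1 : ∑ b : Bool, |f b + g b|^r = w₀*(x₀+y₀)^r + w₁*(x₁+y₁)^r := by
    rw [Fintype.sum_bool]
    simp only [hf, hg, Bool.cond_true, Bool.cond_false]
    rw [show (w₁:ℝ)^(1/r) * x₁ + w₁^(1/r) * y₁ = w₁^(1/r) * (x₁+y₁) by ring,
      show (w₀:ℝ)^(1/r) * x₀ + w₀^(1/r) * y₀ = w₀^(1/r) * (x₀+y₀) by ring,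
      habs _ _ hw₁ (by linarith), habs _ _ hw₀ (by linarith)]
    ring
  have e2 : ∑ b : Bool, |f b|^r = w₀*x₀^r + w₁*x₁^r := by
    rw [Fintype.sum_bool]
    simp only [hf, Bool.cond_true, Bool.cond_false]
    rw [habs _ _ hw₁ hx₁, habs _ _ hw₀ hx₀]
    ring
  have e3 : ∑ b : Bool, |g b|^r = w₀*y₀^r + w₁*y₁^r := by
    rw [Fintype.sum_bool]
    simp only [hg, Bool.cond_true, Bool.cond_false]
    rw [habs _ _ hw₁ hy₁, habs _ _ hw₀ hy₀]
    ring
  rw [e1, e2, e3] at key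
  exact key

/-- Finset-sum weighted Minkowski over a two-point space. -/
lemma minkfin {ι : Type*} (s : Finset ι) {r w₀ w₁ : ℝ} (hr : 1 ≤ r)
    (hw₀ : 0 ≤ w₀) (hw₁ : 0 ≤ w₁) (u : ι → Bool → ℝ) (hu : ∀ i b, 0 ≤ u i b) :
    (w₀ * (∑ i ∈ s, u i false)^r + w₁ * (∑ i ∈ s, u i true)^r)^(1/r)
      ≤ ∑ i ∈ s, (w₀ * (u i false)^r + w₁ * (u i true)^r)^(1/r) := by
  classical
  induction s using Finset.cons_induction with
  | empty =>
    have hr0 : (0:ℝ) < r := by linarith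
    simp only [Finset.sum_empty, Real.zero_rpow (ne_of_gt hr0), mul_zero, add_zero,
      Real.zero_rpow (one_div_ne_zero (ne_of_gt hr0)), le_refl]
  | cons a s ha ih =>
    rw [Finset.sum_cons, Finset.sum_cons, Finset.sum_cons]
    calc (w₀ * (u a false + ∑ i ∈ s, u i false)^r + w₁ * (u a true + ∑ i ∈ s, u i true)^r)^(1/r)
        ≤ (w₀ * (u a false)^r + w₁ * (u a true)^r)^(1/r)
          + (w₀ * (∑ i ∈ s, u i false)^r + w₁ * (∑ i ∈ s, u i true)^r)^(1/r) :=
          mink2 hr hw₀ hw₁ (hu a false) (hu a true)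
            (Finset.sum_nonneg fun i _ => hu i false) (Finset.sum_nonneg fun i _ => hu i true)
      _ ≤ _ := add_le_add (le_refl _) ih

end OnebitMink

section Kernel

noncomputable def wB (p : ℝ) (b : Bool) : ℝ := if b then p else 1 - p

noncomputable def cB (p : ℝ) (b : Bool) : ℝ :=
  ((if b then (1:ℝ) else -1) - (2 * p - 1)) / (2 * Real.sqrt (p * (1 - p)))

noncomputable def Ker (p γ : ℝ) {n : ℕ} (x y : Fin n → Bool) : ℝ :=
  ∏ i, (1 + γ * (cB p (x i) * cB p (y i)))

noncomputable def Nop (p γ : ℝ) {n : ℕ} (f : (Fin n → Bool) → ℝ) : (Fin n → Bool) → ℝ :=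
  fun x => ∑ y, pwt p y * f y * Ker p γ x y

lemma wB_false (p : ℝ) : wB p false = 1 - p := rfl
lemma wB_true (p : ℝ) : wB p true = p := rfl

lemma chi_eq (p : ℝ) {n : ℕ} (S : Finset (Fin n)) (x : Fin n → Bool) :
    chi p S x = ∏ i ∈ S, cB p (x i) := rfl

lemma sum_prod_subsets {n : ℕ} (a : Fin n → ℝ) :
    ∑ S : Finset (Fin n), ∏ i ∈ S, a i = ∏ i, (1 + a i) := by
  classical
  have h := Finset.prod_add a (fun _ => (1:ℝ)) Finset.univ
  simp only [Finset.prod_const_one, mul_one] at h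
  rw [Finset.powerset_univ] at h
  have h2 : ∏ i, (1 + a i) = ∏ i, (a i + 1) := by
    apply Finset.prod_congr rfl
    intros
    ring
  rw [h2, h]

lemma noiseOp_eq (p γ : ℝ) {n : ℕ} (f : (Fin n → Bool) → ℝ) :
    noiseOp p γ f = Nop p γ f := by
  funext x
  unfold noiseOp Nop fhat pE
  simp only [Finset.sum_mul, Finset.mul_sum]
  rw [Finset.sum_comm]
  apply Finset.sum_congr rfl
  intro y _
  have hker : pwt p y * f y * Ker p γ x y
      = pwt p y * f y * ∑ S : Finset (Fin n), ∏ i ∈ S, (γ * (cB p (x i) * cB p (y i))) := by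
    rw [sum_prod_subsets]
    rfl
  rw [hker, Finset.mul_sum]
  apply Finset.sum_congr rfl
  intro S _
  rw [chi_eq, chi_eq]
  have hc : γ ^ S.card = ∏ _i ∈ S, γ := (Finset.prod_const γ).symm ▸ rfl
  calc γ ^ S.card * (pwt p y * (f y * ∏ i ∈ S, cB p (y i))) * ∏ i ∈ S, cB p (x i)
      = pwt p y * f y * ((∏ _i ∈ S, γ) * ((∏ i ∈ S, cB p (x i)) * (∏ i ∈ S, cB p (y i)))) := by
        rw [Finset.prod_const]
        ring
    _ = pwt p y * f y * ∏ i ∈ S, (γ * (cB p (x i) * cB p (y i))) := by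
        simp only [← Finset.prod_mul_distrib]

lemma sum_pi_succ {n : ℕ} (F : (Fin (n+1) → Bool) → ℝ) :
    ∑ x, F x = ∑ b : Bool, ∑ y : Fin n → Bool, F (Fin.cons b y) := by
  rw [← (Fin.consEquiv (fun _ => Bool)).sum_comp F, Fintype.sum_prod_type]
  rfl

lemma pwt_cons (p : ℝ) {n : ℕ} (b : Bool) (y : Fin n → Bool) :
    pwt p (Fin.cons b y) = wB p b * pwt p y := by
  unfold pwt wB
  rw [Fin.prod_univ_succ]
  simp

lemma Ker_cons (p γ : ℝ) {n : ℕ} (b c : Bool) (x y : Fin n → Bool) :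
    Ker p γ (Fin.cons b x) (Fin.cons c y) = (1 + γ * (cB p b * cB p c)) * Ker p γ x y := by
  unfold Ker
  rw [Fin.prod_univ_succ]
  simp

lemma pwt_nonneg {p : ℝ} (hp : p ∈ Set.Ioo (0:ℝ) 1) {n : ℕ} (x : Fin n → Bool) :
    0 ≤ pwt p x := by
  apply Finset.prod_nonneg
  intro i _
  split <;> [linarith [hp.1]; linarith [hp.2]]

lemma cB_false {p : ℝ} (hp : p ∈ Set.Ioo (0:ℝ) 1) :
    cB p false = -(p / Real.sqrt (p * (1 - p))) := by
  have hs : 0 < Real.sqrt (p * (1 - p)) :=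
    Real.sqrt_pos.2 (by nlinarith [hp.1, hp.2])
  unfold cB
  rw [if_neg (by simp)]
  field_simp
  ring

lemma cB_true {p : ℝ} (hp : p ∈ Set.Ioo (0:ℝ) 1) :
    cB p true = (1 - p) / Real.sqrt (p * (1 - p)) := by
  have hs : 0 < Real.sqrt (p * (1 - p)) :=
    Real.sqrt_pos.2 (by nlinarith [hp.1, hp.2])
  unfold cB
  rw [if_pos rfl]
  field_simp
  ring

lemma cB_mean {p : ℝ} (hp : p ∈ Set.Ioo (0:ℝ) 1) :
    wB p false * cB p false + wB p true * cB p true = 0 := by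
  have hs : 0 < Real.sqrt (p * (1 - p)) :=
    Real.sqrt_pos.2 (by nlinarith [hp.1, hp.2])
  have h2 : Real.sqrt (p - p^2) ^ 2 = p - p^2 :=
    Real.sq_sqrt (by nlinarith [hp.1, hp.2])
  rw [wB_false, wB_true, cB_false hp, cB_true hp]
  have h2' : Real.sqrt (p * (1 - p)) ^ 2 = p * (1 - p) :=
    Real.sq_sqrt (by nlinarith [hp.1, hp.2])
  field_simp
  linear_combination

end Kernel

section Main

lemma pointbound {p q γ : ℝ} (hp : p ∈ Set.Ioo (0:ℝ) 1) (hq : 2 ≤ q)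
    (hγb : ∀ b, |γ * cB p b| ≤ (Real.sqrt (q-1))⁻¹) (α β : ℝ) :
    wB p false * |α + γ * cB p false * β|^q + wB p true * |α + γ * cB p true * β|^q
      ≤ (α^2 + β^2)^(q/2) := by
  have hq1 : (0:ℝ) < q - 1 := by linarith
  have hsq : 0 < Real.sqrt (q-1) := Real.sqrt_pos.2 hq1
  have hu0 : 0 < (Real.sqrt (q-1))⁻¹ := by positivity
  have hu2 : (q-1) * ((Real.sqrt (q-1))⁻¹)^2 = 1 := by
    rw [inv_pow, Real.sq_sqrt (le_of_lt hq1), mul_inv_cancel₀ (ne_of_gt hq1)]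
  have hb0 := abs_le.1 (hγb false)
  have hb1 := abs_le.1 (hγb true)
  have hw0 : 0 ≤ wB p false := by rw [wB_false]; linarith [hp.2]
  have hw1 : 0 ≤ wB p true := by rw [wB_true]; linarith [hp.1]
  have hws : wB p false + wB p true = 1 := by rw [wB_false, wB_true]; ring
  have hmean : wB p false * (γ * cB p false) + wB p true * (γ * cB p true) = 0 := by
    linear_combination γ * cB_mean hp
  exact onebit hq hu0 hu2 hw0 hw1 hws hb0.1 hb0.2 hb1.1 hb1.2 hmean α β

lemma main_hc {p q γ : ℝ} (hp : p ∈ Set.Ioo (0:ℝ) 1) (hq : 2 ≤ q)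
    (hγb : ∀ b, |γ * cB p b| ≤ (Real.sqrt (q-1))⁻¹) :
    ∀ {n : ℕ} (f : (Fin n → Bool) → ℝ),
      pE p (fun x => |Nop p γ f x|^q) ≤ (pE p (fun x => f x^2))^(q/2) := by
  intro n
  induction n with
  | zero =>
    intro f
    have hone : ∀ g : (Fin 0 → Bool) → ℝ, pE p g = g default := by
      intro g
      unfold pE
      rw [Finset.sum_eq_single_of_mem default (Finset.mem_univ _)
        (fun b _ hb => absurd (Subsingleton.elim b default) hb)]
      simp [pwt]
    have hNop0 : Nop p γ f default = f default := by
      unfold Nop Ker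
      rw [Finset.sum_eq_single_of_mem default (Finset.mem_univ _)
        (fun b _ hb => absurd (Subsingleton.elim b default) hb)]
      simp [pwt]
    have l1 : pE p (fun x => |Nop p γ f x|^q) = |Nop p γ f default|^q := hone _
    have l2 : pE p (fun x => f x^2) = f default^2 := hone _
    rw [l1, l2, hNop0]
    apply le_of_eq
    rw [← sq_abs (f default), ← Real.rpow_natCast (|f default|) 2,
      ← Real.rpow_mul (abs_nonneg _)]
    congr 1
    push_cast
    ring
  | succ n IH =>
    intro f
    have hq0 : (0:ℝ) < q := by linarith
    have hqne : q ≠ 0 := ne_of_gt hq0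
    have hr : (1:ℝ) ≤ q/2 := by linarith
    have hr0 : (0:ℝ) < q/2 := by linarith
    have hrne : q/2 ≠ 0 := ne_of_gt hr0
    have hw0 : 0 ≤ wB p false := by rw [wB_false]; linarith [hp.2]
    have hw1 : 0 ≤ wB p true := by rw [wB_true]; linarith [hp.1]
    set d : (Fin n → Bool) → ℝ :=
      fun y => wB p false * f (Fin.cons false y) + wB p true * f (Fin.cons true y) with hd
    set e : (Fin n → Bool) → ℝ :=
      fun y => wB p false * cB p false * f (Fin.cons false y)
        + wB p true * cB p true * f (Fin.cons true y) with he
    set g : Bool → (Fin n → Bool) → ℝ := fun b y => d y + γ * cB p b * e y with hg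
    have hNop : ∀ (b : Bool) (x : Fin n → Bool),
        Nop p γ f (Fin.cons b x) = Nop p γ (g b) x := by
      intro b x
      unfold Nop
      rw [sum_pi_succ (fun z => pwt p z * f z * Ker p γ (Fin.cons b x) z), Fintype.sum_bool,
        ← Finset.sum_add_distrib]
      apply Finset.sum_congr rfl
      intro y _
      rw [pwt_cons, pwt_cons, Ker_cons, Ker_cons, hg, hd, he]
      dsimp only
      ring
    have hsplit : pE p (fun x => |Nop p γ f x|^q)
        = wB p false * pE p (fun x => |Nop p γ (g false) x|^q)
          + wB p true * pE p (fun x => |Nop p γ (g true) x|^q) := by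
      unfold pE
      rw [sum_pi_succ (fun x => pwt p x * |Nop p γ f x|^q), Fintype.sum_bool,
        Finset.mul_sum, Finset.mul_sum, add_comm]
      congr 1 <;>
        (apply Finset.sum_congr rfl; intro y _; rw [pwt_cons, hNop]; ring)
    have hpars : pE p (fun x => f x ^ 2) = ∑ y : Fin n → Bool, pwt p y * (d y^2 + e y^2) := by
      unfold pE
      rw [sum_pi_succ (fun x => pwt p x * f x^2), Fintype.sum_bool, ← Finset.sum_add_distrib]
      apply Finset.sum_congr rfl
      intro y _
      rw [pwt_cons, pwt_cons, hd, he]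
      dsimp only
      have hs2 : Real.sqrt (p * (1-p)) ^ 2 = p * (1-p) :=
        Real.sq_sqrt (by nlinarith [hp.1, hp.2])
      have hsne : Real.sqrt (p * (1-p)) ≠ 0 :=
        ne_of_gt (Real.sqrt_pos.2 (by nlinarith [hp.1, hp.2]))
      rw [wB_false, wB_true, cB_false hp, cB_true hp]
      have heq : (1-p) * (-(p / Real.sqrt (p * (1-p)))) * f (Fin.cons false y)
          + p * ((1-p) / Real.sqrt (p * (1-p))) * f (Fin.cons true y)
          = Real.sqrt (p * (1-p)) * (f (Fin.cons true y) - f (Fin.cons false y)) := by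
        field_simp
        linear_combination (f (Fin.cons false y) - f (Fin.cons true y)) * hs2
      rw [heq]
      linear_combination (-(pwt p y * (f (Fin.cons true y) - f (Fin.cons false y))^2)) * hs2
    set S : Bool → ℝ := fun b => pE p (fun y => g b y ^ 2) with hS
    have hS_nonneg : ∀ b, 0 ≤ S b := by
      intro b
      rw [hS]
      apply Finset.sum_nonneg
      intro y _
      exact mul_nonneg (pwt_nonneg hp y) (sq_nonneg _)
    have hstep : wB p false * (S false)^(q/2) + wB p true * (S true)^(q/2)
        ≤ (∑ y : Fin n → Bool, pwt p y * (d y^2 + e y^2))^(q/2) := by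
      set T := ∑ y : Fin n → Bool, pwt p y * (d y^2 + e y^2) with hT
      have hU : ∀ (y : Fin n → Bool) (b : Bool), (0:ℝ) ≤ pwt p y * (g b y)^2 :=
        fun y b => mul_nonneg (pwt_nonneg hp y) (sq_nonneg _)
      have hmk := minkfin Finset.univ hr hw0 hw1 (fun y b => pwt p y * (g b y)^2)
        (fun y b => hU y b)
      have hSsum : ∀ b, (∑ y : Fin n → Bool, pwt p y * (g b y)^2) = S b := fun b => rfl
      have hper : ∀ y : Fin n → Bool,
          (wB p false * (pwt p y * (g false y)^2)^(q/2)
            + wB p true * (pwt p y * (g true y)^2)^(q/2))^(1/(q/2))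
            ≤ pwt p y * (d y^2 + e y^2) := by
        intro y
        have hpw := pwt_nonneg hp y
        have h1 : ∀ b : Bool, (pwt p y * (g b y)^2)^(q/2) = (pwt p y)^(q/2) * |g b y|^q := by
          intro b
          rw [Real.mul_rpow hpw (sq_nonneg _), ← sq_abs (g b y),
            ← Real.rpow_natCast (|g b y|) 2, ← Real.rpow_mul (abs_nonneg _)]
          congr 2
          push_cast
          ring
        rw [h1 false, h1 true,
          show wB p false * ((pwt p y)^(q/2) * |g false y|^q)
              + wB p true * ((pwt p y)^(q/2) * |g true y|^q)
            = (pwt p y)^(q/2) * (wB p false * |g false y|^q + wB p true * |g true y|^q)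
            from by ring]
        have hWnn : 0 ≤ wB p false * |g false y|^q + wB p true * |g true y|^q :=
          add_nonneg (mul_nonneg hw0 (Real.rpow_nonneg (abs_nonneg _) _))
            (mul_nonneg hw1 (Real.rpow_nonneg (abs_nonneg _) _))
        rw [Real.mul_rpow (Real.rpow_nonneg hpw _) hWnn,
          ← Real.rpow_mul hpw, mul_one_div, div_self hrne, Real.rpow_one]
        apply mul_le_mul_of_nonneg_left _ hpw
        have hob : wB p false * |g false y|^q + wB p true * |g true y|^q
            ≤ (d y^2 + e y^2)^(q/2) := by
          have := pointbound hp hq hγb (d y) (e y)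
          rw [hg]
          exact this
        calc (wB p false * |g false y|^q + wB p true * |g true y|^q)^(1/(q/2))
            ≤ ((d y^2 + e y^2)^(q/2))^(1/(q/2)) :=
              Real.rpow_le_rpow hWnn hob (by positivity)
          _ = d y^2 + e y^2 := by
              rw [← Real.rpow_mul (by positivity), mul_one_div, div_self hrne, Real.rpow_one]
      have hsum : (wB p false * (S false)^(q/2) + wB p true * (S true)^(q/2))^(1/(q/2)) ≤ T := by
        calc (wB p false * (S false)^(q/2) + wB p true * (S true)^(q/2))^(1/(q/2))
            = (wB p false * (∑ y : Fin n → Bool, pwt p y * (g false y)^2)^(q/2)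
              + wB p true * (∑ y : Fin n → Bool, pwt p y * (g true y)^2)^(q/2))^(1/(q/2)) := by
              rw [hSsum false, hSsum true]
          _ ≤ ∑ y : Fin n → Bool, (wB p false * (pwt p y * (g false y)^2)^(q/2)
              + wB p true * (pwt p y * (g true y)^2)^(q/2))^(1/(q/2)) := hmk
          _ ≤ ∑ y : Fin n → Bool, pwt p y * (d y^2 + e y^2) :=
              Finset.sum_le_sum (fun y _ => hper y)
          _ = T := rfl
      have hX0 : 0 ≤ wB p false * (S false)^(q/2) + wB p true * (S true)^(q/2) :=
        add_nonneg (mul_nonneg hw0 (Real.rpow_nonneg (hS_nonneg false) _))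
          (mul_nonneg hw1 (Real.rpow_nonneg (hS_nonneg true) _))
      calc wB p false * (S false)^(q/2) + wB p true * (S true)^(q/2)
          = ((wB p false * (S false)^(q/2) + wB p true * (S true)^(q/2))^(1/(q/2)))^(q/2) := by
            rw [← Real.rpow_mul hX0, one_div, inv_mul_cancel₀ hrne, Real.rpow_one]
        _ ≤ T^(q/2) := Real.rpow_le_rpow (Real.rpow_nonneg hX0 _) hsum (le_of_lt hr0)
    calc pE p (fun x => |Nop p γ f x|^q)
        = wB p false * pE p (fun x => |Nop p γ (g false) x|^q)
          + wB p true * pE p (fun x => |Nop p γ (g true) x|^q) := hsplit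
      _ ≤ wB p false * (S false)^(q/2) + wB p true * (S true)^(q/2) :=
          add_le_add (mul_le_mul_of_nonneg_left (IH (g false)) hw0)
            (mul_le_mul_of_nonneg_left (IH (g true)) hw1)
      _ ≤ (∑ y : Fin n → Bool, pwt p y * (d y^2 + e y^2))^(q/2) := hstep
      _ = (pE p (fun x => f x^2))^(q/2) := by rw [hpars]

end Main

/-- Hypercontractivity for the p-biased measure, smoothing parameter (iii):
γ = √(λ/(1-λ)) / √(q-1). -/
theorem stmt3 (p : ℝ) (hp : p ∈ Set.Ioo (0:ℝ) 1) (q : ℝ) (hq : 2 ≤ q)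
    (γ : ℝ) (hγ : γ = Real.sqrt (min p (1 - p) / (1 - min p (1 - p))) / Real.sqrt (q - 1))
    (n : ℕ) (f : (Fin n → Bool) → ℝ) :
    pNorm p q (noiseOp p γ f) ≤ pNorm p 2 f := by
  obtain ⟨hp0, hp1⟩ := hp
  have hp' : p ∈ Set.Ioo (0:ℝ) 1 := ⟨hp0, hp1⟩
  have hq1 : (0:ℝ) < q - 1 := by linarith
  have hsq : 0 < Real.sqrt (q - 1) := Real.sqrt_pos.2 hq1
  have hs0 : (0:ℝ) < p * (1-p) := by nlinarith
  have hs : 0 < Real.sqrt (p * (1-p)) := Real.sqrt_pos.2 hs0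
  have hs2 : Real.sqrt (p * (1-p))^2 = p * (1-p) := Real.sq_sqrt (le_of_lt hs0)
  set m := min p (1-p) with hm
  have hm0 : 0 < m := lt_min hp0 (by linarith)
  have hm1 : m < 1 := lt_of_le_of_lt (min_le_left _ _) hp1
  have hX0 : (0:ℝ) ≤ m / (1-m) := div_nonneg (le_of_lt hm0) (by linarith)
  have hkey : ∀ b, Real.sqrt (m/(1-m)) * |cB p b| ≤ 1 := by
    have h2 : ∀ c : ℝ, 0 < c → c^2 * m ≤ (1-m) * (p*(1-p)) →
        Real.sqrt (m/(1-m)) * (c/Real.sqrt (p*(1-p))) ≤ 1 := by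
      intro c hc hle
      have hA0 : 0 ≤ Real.sqrt (m/(1-m)) * (c/Real.sqrt (p*(1-p))) := by positivity
      have hA2 : (Real.sqrt (m/(1-m)) * (c/Real.sqrt (p*(1-p))))^2 ≤ 1 := by
        rw [mul_pow, Real.sq_sqrt hX0, div_pow, hs2, div_mul_div_comm,
          div_le_one (mul_pos (by linarith : (0:ℝ) < 1 - m) hs0)]
        nlinarith [hle]
      nlinarith [hA2, hA0]
    intro b
    cases b
    · rw [cB_false hp', abs_neg, abs_of_nonneg (div_nonneg (le_of_lt hp0) (le_of_lt hs))]
      apply h2 p hp0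
      rcases le_total p (1-p) with hcmp | hcmp
      · rw [hm, min_eq_left hcmp]
        nlinarith [mul_nonneg (le_of_lt hp0) (by linarith : (0:ℝ) ≤ 1 - 2*p), hp0, hcmp]
      · rw [hm, min_eq_right hcmp]
        nlinarith
    · rw [cB_true hp', abs_of_nonneg (div_nonneg (by linarith) (le_of_lt hs))]
      apply h2 (1-p) (by linarith)
      rcases le_total p (1-p) with hcmp | hcmp
      · rw [hm, min_eq_left hcmp]
        nlinarith
      · rw [hm, min_eq_right hcmp]
        nlinarith [mul_nonneg (by linarith : (0:ℝ) ≤ 1 - p) (by linarith : (0:ℝ) ≤ 2*p - 1),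
          hp1, hcmp]
  have hγb : ∀ b, |γ * cB p b| ≤ (Real.sqrt (q-1))⁻¹ := by
    intro b
    calc |γ * cB p b|
        = (Real.sqrt (m/(1-m)) * |cB p b|) * (Real.sqrt (q-1))⁻¹ := by
          rw [hγ, abs_mul, abs_of_nonneg (by positivity : (0:ℝ) ≤ Real.sqrt (m/(1-m)) / Real.sqrt (q-1))]
          ring
      _ ≤ 1 * (Real.sqrt (q-1))⁻¹ :=
          mul_le_mul_of_nonneg_right (hkey b) (by positivity)
      _ = (Real.sqrt (q-1))⁻¹ := one_mul _
  have hmain := main_hc hp' hq hγb f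
  have hnn2 : 0 ≤ pE p (fun x => f x^2) :=
    Finset.sum_nonneg fun x _ => mul_nonneg (pwt_nonneg hp' x) (sq_nonneg _)
  have hnnq : 0 ≤ pE p (fun x => |Nop p γ f x|^q) :=
    Finset.sum_nonneg fun x _ => mul_nonneg (pwt_nonneg hp' x) (Real.rpow_nonneg (abs_nonneg _) _)
  unfold pNorm
  rw [noiseOp_eq]
  have h2eq : (pE p fun x => |f x|^(2:ℝ)) = pE p (fun x => f x^2) := by
    unfold pE
    apply Finset.sum_congr rfl
    intro x _
    dsimp only
    congr 1
    rw [show ((2:ℝ)) = ((2:ℕ):ℝ) by norm_num, Real.rpow_natCast, sq_abs]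
  rw [h2eq]
  calc (pE p fun x => |Nop p γ f x|^q)^(1/q)
      ≤ ((pE p (fun x => f x^2))^(q/2))^(1/q) :=
        Real.rpow_le_rpow hnnq hmain (by positivity)
    _ = (pE p (fun x => f x^2))^((1:ℝ)/2) := by
        rw [← Real.rpow_mul hnn2]
        congr 1
        field_simp
end

section
/- Let f : {−1,1}^n → ℝ and for p ∈ (0,1) let g(p) = E_{μ_p}[f], where μ_p is the p-biased measure. Then g is differentiable on (0,1) and g'(p) = Σ_{i=1}^n E_{μ_p}[ f∘τ_i^+ − f∘τ_i^− ]. -/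
open Filter Function Real

lemma key_lemma (n : ℕ) (p : ℝ) (f : (Fin n → Bool) → ℝ) (i : Fin n) :
    ∑ x : Fin n → Bool,
      (∏ j ∈ Finset.univ.erase i, (if x j then p else 1 - p)) *
        ((if x i then (1:ℝ) else -1) * f x)
    = pE p (fun x => f (Function.update x i true) - f (Function.update x i false)) := by
  classical
  set P : (Fin n → Bool) → ℝ := fun x => ∏ j ∈ Finset.univ.erase i, (if x j then p else 1 - p)
    with hP
  set d : (Fin n → Bool) → ℝ := fun x => if x i then 1 else -1 with hd
  set g : (Fin n → Bool) → ℝ :=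
    fun x => f (Function.update x i true) - f (Function.update x i false) with hg
  have hinv : Function.Involutive (fun x : Fin n → Bool => Function.update x i (!x i)) := by
    intro x; funext j
    by_cases h : j = i
    · subst h; simp
    · simp [Function.update_of_ne h]
  set σ : Equiv.Perm (Fin n → Bool) := hinv.toPerm _ with hσ
  have hσx : ∀ x, σ x = Function.update x i (!x i) := fun x => rfl
  have hPσ : ∀ x, P (σ x) = P x := by
    intro x
    refine Finset.prod_congr rfl fun j hj => ?_
    rw [hσx, Function.update_of_ne (Finset.ne_of_mem_erase hj)]
  have hdσ : ∀ x, d (σ x) = -d x := by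
    intro x
    rw [hσx]; simp only [hd, Function.update_self]
    cases h : x i <;> simp [h]
  have hgσ : ∀ x, g (σ x) = g x := by
    intro x
    rw [hσx]; simp only [hg, Function.update_idem]
  have hfd : ∀ x, d x * (f x - f (σ x)) = g x := by
    intro x
    rw [hσx]
    cases h : x i
    · have : Function.update x i false = x := by
        rw [← h]; exact Function.update_eq_self i x
      simp [hd, hg, h, this]
      try ring
    · have : Function.update x i true = x := by
        rw [← h]; exact Function.update_eq_self i x
      simp [hd, hg, h, this]
      try ring
  have hpwt : ∀ x, pwt p x = (if x i then p else 1 - p) * P x := by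
    intro x
    rw [pwt, hP, ← Finset.mul_prod_erase Finset.univ _ (Finset.mem_univ i)]
  have hwσ : ∀ x, (if (σ x) i then p else 1 - p) = 1 - (if x i then p else 1 - p) := by
    intro x; rw [hσx]; simp only [Function.update_self]
    cases h : x i <;> simp [h]
  -- double the LHS
  have e1 : ∑ x, P x * (d x * f x) = ∑ x, P x * (-d x * f (σ x)) := by
    rw [← Equiv.sum_comp σ (fun x => P x * (d x * f x))]
    refine Finset.sum_congr rfl fun x _ => ?_
    rw [hPσ, hdσ]
  have e2 : (2:ℝ) * ∑ x, P x * (d x * f x) = ∑ x, P x * g x := by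
    rw [two_mul]
    nth_rewrite 2 [e1]
    rw [← Finset.sum_add_distrib]
    refine Finset.sum_congr rfl fun x _ => ?_
    rw [← hfd x]; ring
  -- double the RHS
  have e3 : ∑ x, pwt p x * g x = ∑ x, (1 - (if x i then p else 1 - p)) * P x * g x := by
    rw [← Equiv.sum_comp σ (fun x => pwt p x * g x)]
    refine Finset.sum_congr rfl fun x _ => ?_
    rw [hpwt, hwσ, hPσ, hgσ]
  have e4 : (2:ℝ) * ∑ x, pwt p x * g x = ∑ x, P x * g x := by
    rw [two_mul]
    nth_rewrite 2 [e3]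
    nth_rewrite 1 [show ∑ x, pwt p x * g x = ∑ x, (if x i then p else 1 - p) * P x * g x from
      Finset.sum_congr rfl fun x _ => by rw [hpwt]]
    rw [← Finset.sum_add_distrib]
    refine Finset.sum_congr rfl fun x _ => ?_
    ring
  have final : ∑ x, P x * (d x * f x) = ∑ x, pwt p x * g x := by linarith
  calc ∑ x : Fin n → Bool, P x * (d x * f x) = ∑ x, pwt p x * g x := final
    _ = pE p g := rfl

/-- Rossignol's lemma: the map p ↦ E_{μ_p}[f] is differentiable on (0,1) with derivative
Σᵢ E_{μ_p}[f∘τᵢ⁺ - f∘τᵢ⁻]. -/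
theorem stmt8 (n : ℕ) (f : (Fin n → Bool) → ℝ) (p : ℝ) (hp : p ∈ Set.Ioo (0:ℝ) 1) :
    HasDerivAt (fun t : ℝ => pE t f)
      (∑ i : Fin n,
        pE p (fun x => f (Function.update x i true) - f (Function.update x i false))) p := by
  classical
  have hderiv : ∀ x : Fin n → Bool,
      HasDerivAt (fun t : ℝ => pwt t x * f x)
        ((∑ i, (∏ j ∈ Finset.univ.erase i, (if x j then p else 1 - p)) *
          (if x i then (1:ℝ) else -1)) * f x) p := by
    intro x
    have h1 : HasDerivAt (fun t : ℝ => ∏ i, (if x i then t else 1 - t))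
        (∑ i, (∏ j ∈ Finset.univ.erase i, (if x j then p else 1 - p)) •
          (if x i then (1:ℝ) else -1)) p := by
      refine HasDerivAt.fun_finsetProd (fun i _ => ?_)
      cases h : x i
      · simpa [h] using (hasDerivAt_const p (1:ℝ)).fun_sub (hasDerivAt_id' p)
      · simpa [h] using hasDerivAt_id' p
    simpa [smul_eq_mul, pwt] using h1.mul_const (f x)
  have hsum : HasDerivAt (fun t : ℝ => pE t f)
      (∑ x : Fin n → Bool, (∑ i, (∏ j ∈ Finset.univ.erase i, (if x j then p else 1 - p)) *
        (if x i then (1:ℝ) else -1)) * f x) p :=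
    HasDerivAt.fun_sum (fun x _ => hderiv x)
  have hval : (∑ x : Fin n → Bool, (∑ i, (∏ j ∈ Finset.univ.erase i,
        (if x j then p else 1 - p)) * (if x i then (1:ℝ) else -1)) * f x)
      = ∑ i : Fin n,
        pE p (fun x => f (Function.update x i true) - f (Function.update x i false)) := by
    simp only [Finset.sum_mul]
    rw [Finset.sum_comm]
    refine Finset.sum_congr rfl fun i _ => ?_
    rw [← key_lemma n p f i]
    exact Finset.sum_congr rfl fun x _ => by ring
  exact hval ▸ hsum
end

section
/- Let f : {−1,1}^n → ℝ be monotone, i.e. x ⪯ y (coordinatewise) implies f(x) ≤ f(y). Then for every p ∈ (0,1), under the p-biased measure μ_p one has Σ_{i=1}^n E_{μ_p}[ f∘τ_i^+ − f∘τ_i^− ] ≥ 2·Σ_{i=1}^n ‖f − E_i[f]‖₁; in particular the derivative of p ↦ E_{μ_p}[f] is at least 2·Σ_{i=1}^n ‖f − E_i[f]‖₁. -/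
open Filter Function Real

namespace Stmt13Aux

variable {n : ℕ}

/-- single-coordinate weight -/
noncomputable def w (p : ℝ) (b : Bool) : ℝ := if b then p else 1 - p

/-- product of weights over coordinates other than `i` -/
noncomputable def W (p : ℝ) (i : Fin n) (x : Fin n → Bool) : ℝ :=
  ∏ j ∈ Finset.univ.erase i, w p (x j)

lemma pwt_eq (p : ℝ) (x : Fin n → Bool) : pwt p x = ∏ j, w p (x j) := rfl

lemma W_update (p : ℝ) (i : Fin n) (x : Fin n → Bool) (b : Bool) :
    W p i (Function.update x i b) = W p i x := by
  unfold W
  refine Finset.prod_congr rfl fun j hj => ?_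
  rw [Function.update_of_ne (Finset.ne_of_mem_erase hj)]

lemma pwt_update (p : ℝ) (i : Fin n) (x : Fin n → Bool) (b : Bool) :
    pwt p (Function.update x i b) = w p b * W p i x := by
  rw [pwt_eq]
  have h : (fun j => w p (Function.update x i b j)) =
      Function.update (fun j => w p (x j)) i (w p b) := by
    funext j
    by_cases h : j = i
    · subst h; simp
    · simp [Function.update_of_ne h]
  rw [h, Finset.prod_update_of_mem (Finset.mem_univ i)]
  unfold W
  rw [Finset.erase_eq]

lemma update_symm (i : Fin n) (b b' : Bool) (y : {j // j ≠ i} → Bool) :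
    Function.update ((Equiv.funSplitAt i Bool).symm (b, y)) i b' =
      (Equiv.funSplitAt i Bool).symm (b', y) := by
  funext j
  by_cases h : j = i
  · subst h; simp
  · simp [Function.update_of_ne h, h]

/-- Master splitting lemma: pairing over coordinate `i`. -/
lemma sum_split (i : Fin n) (F : (Fin n → Bool) → ℝ) :
    ∑ x : Fin n → Bool, F x =
      (1/2) * ∑ x : Fin n → Bool,
        (F (Function.update x i true) + F (Function.update x i false)) := by
  rw [← Equiv.sum_comp (Equiv.funSplitAt i Bool).symm F,
      ← Equiv.sum_comp (Equiv.funSplitAt i Bool).symm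
        (fun x => F (Function.update x i true) + F (Function.update x i false))]
  rw [Fintype.sum_prod_type, Fintype.sum_prod_type]
  simp only [update_symm, Fintype.sum_bool, Finset.sum_add_distrib]
  ring

/-- positive minus negative restriction -/
noncomputable def Df (f : (Fin n → Bool) → ℝ) (i : Fin n) (x : Fin n → Bool) : ℝ :=
  f (Function.update x i true) - f (Function.update x i false)

lemma Df_update (f : (Fin n → Bool) → ℝ) (i : Fin n) (x : Fin n → Bool) (b : Bool) :
    Df f i (Function.update x i b) = Df f i x := by
  unfold Df; rw [Function.update_idem, Function.update_idem]

lemma I3 (f : (Fin n → Bool) → ℝ) (p : ℝ) (i : Fin n) :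
    ∑ x : Fin n → Bool, (if x i then (1:ℝ) else -1) * W p i x * f x =
      ∑ x : Fin n → Bool, pwt p x * Df f i x := by
  rw [sum_split i (fun x => (if x i then (1:ℝ) else -1) * W p i x * f x),
      sum_split i (fun x => pwt p x * Df f i x)]
  congr 1
  refine Finset.sum_congr rfl fun x _ => ?_
  simp only [Function.update_self, pwt_update, W_update, Df_update]
  simp only [Df, w]
  norm_num
  ring

lemma russo (f : (Fin n → Bool) → ℝ) (p : ℝ) :
    HasDerivAt (fun t : ℝ => pE t f)
      (∑ i : Fin n,
        pE p (fun x => f (Function.update x i true) - f (Function.update x i false))) p := by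
  have key : ∀ x : Fin n → Bool, HasDerivAt (fun t => pwt t x)
      (∑ i : Fin n, W p i x * (if x i then (1:ℝ) else -1)) p := by
    intro x
    have h := HasDerivAt.fun_finsetProd (𝕜 := ℝ) (x := p) (u := (Finset.univ : Finset (Fin n)))
      (f := fun j t => w t (x j)) (f' := fun j => if x j then (1:ℝ) else -1)
      (fun j _ => by
        cases hj : x j <;> simp only [w, hj, if_true, if_false]
        · exact (hasDerivAt_id p).const_sub 1
        · exact hasDerivAt_id p)
    simpa [pwt_eq, W, smul_eq_mul] using h
  have hd : HasDerivAt (fun t : ℝ => pE t f)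
      (∑ x : Fin n → Bool,
        (∑ i : Fin n, W p i x * (if x i then (1:ℝ) else -1)) * f x) p := by
    unfold pE
    exact HasDerivAt.fun_sum fun x _ => (key x).mul_const (f x)
  have heq : (∑ x : Fin n → Bool,
        (∑ i : Fin n, W p i x * (if x i then (1:ℝ) else -1)) * f x) =
      ∑ i : Fin n,
        pE p (fun x => f (Function.update x i true) - f (Function.update x i false)) := by
    simp only [Finset.sum_mul]
    rw [Finset.sum_comm]
    refine Finset.sum_congr rfl fun i _ => ?_
    rw [show (pE p fun x => f (Function.update x i true) - f (Function.update x i false)) =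
        ∑ x : Fin n → Bool, pwt p x * Df f i x from rfl, ← I3 f p i]
    refine Finset.sum_congr rfl fun x _ => ?_
    ring
  rw [heq] at hd
  exact hd

end Stmt13Aux

open Stmt13Aux in
/-- For monotone f, Σᵢ E[f∘τᵢ⁺ - f∘τᵢ⁻] ≥ 2·Σᵢ ‖f - Eᵢ[f]‖₁; in particular the derivative
of p ↦ E_{μ_p}[f] is at least 2·Σᵢ ‖f - Eᵢ[f]‖₁. -/
theorem stmt13 (n : ℕ) (f : (Fin n → Bool) → ℝ)
    (hmono : ∀ x y : Fin n → Bool, (∀ i, x i ≤ y i) → f x ≤ f y)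
    (p : ℝ) (hp : p ∈ Set.Ioo (0:ℝ) 1) :
    2 * ∑ i : Fin n, pNorm p 1 (fun x => f x - condE p i f x) ≤
      (∑ i : Fin n,
        pE p (fun x => f (Function.update x i true) - f (Function.update x i false))) ∧
    ∀ D : ℝ, HasDerivAt (fun t : ℝ => pE t f) D p →
      2 * ∑ i : Fin n, pNorm p 1 (fun x => f x - condE p i f x) ≤ D := by
  obtain ⟨hp0, hp1⟩ := hp
  have hDf : ∀ (i : Fin n) (x : Fin n → Bool), 0 ≤ Df f i x := by
    intro i x
    apply sub_nonneg.mpr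
    apply hmono
    intro j
    by_cases h : j = i
    · subst h; simp
    · simp [Function.update_of_ne h]
  have hpwt : ∀ x : Fin n → Bool, 0 ≤ pwt p x := by
    intro x
    apply Finset.prod_nonneg
    intro j _
    by_cases h : x j <;> simp [h] <;> linarith
  -- compute the L1 norm
  have hnorm : ∀ i : Fin n, pNorm p 1 (fun x => f x - condE p i f x) =
      (2 * p * (1 - p)) * ∑ x : Fin n → Bool, pwt p x * Df f i x := by
    intro i
    have h0 : pNorm p 1 (fun x => f x - condE p i f x) =
        ∑ x : Fin n → Bool, pwt p x * |f x - condE p i f x| := by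
      unfold pNorm pE
      norm_num [Real.rpow_one]
    have hx : ∀ x : Fin n → Bool,
        pwt p (Function.update x i true) *
            |f (Function.update x i true) - condE p i f (Function.update x i true)| +
          pwt p (Function.update x i false) *
            |f (Function.update x i false) - condE p i f (Function.update x i false)| =
        2 * p * (1 - p) *
          (pwt p (Function.update x i true) * Df f i (Function.update x i true) +
            pwt p (Function.update x i false) * Df f i (Function.update x i false)) := by
      intro x
      have h1 : f (Function.update x i true) - condE p i f (Function.update x i true) =
          (1 - p) * Df f i x := by
        simp only [condE, Function.update_idem, Df]; ring
      have h2 : f (Function.update x i false) - condE p i f (Function.update x i false) =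
          -(p * Df f i x) := by
        simp only [condE, Function.update_idem, Df]; ring
      rw [h1, h2, abs_neg, abs_of_nonneg (mul_nonneg hp0.le (hDf i x)),
          abs_of_nonneg (mul_nonneg (show (0:ℝ) ≤ 1 - p by linarith) (hDf i x)),
          pwt_update, pwt_update, Df_update, Df_update]
      simp only [w]
      norm_num
      ring
    rw [h0, sum_split i (fun x => pwt p x * |f x - condE p i f x|),
        sum_split i (fun x => pwt p x * Df f i x)]
    simp only [hx]
    rw [← Finset.mul_sum]
    ring
  have hS : ∀ i : Fin n, 0 ≤ ∑ x : Fin n → Bool, pwt p x * Df f i x := by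
    intro i
    exact Finset.sum_nonneg fun x _ => mul_nonneg (hpwt x) (hDf i x)
  have key1 : 2 * ∑ i : Fin n, pNorm p 1 (fun x => f x - condE p i f x) ≤
      ∑ i : Fin n,
        pE p (fun x => f (Function.update x i true) - f (Function.update x i false)) := by
    rw [Finset.mul_sum]
    refine Finset.sum_le_sum fun i _ => ?_
    rw [hnorm i, show (pE p fun x => f (Function.update x i true) -
        f (Function.update x i false)) = ∑ x : Fin n → Bool, pwt p x * Df f i x from rfl]
    nlinarith [hS i, sq_nonneg (2 * p - 1), mul_nonneg (sq_nonneg (2 * p - 1)) (hS i)]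
  refine ⟨key1, fun D hD => ?_⟩
  rw [← (russo f p).unique hD]
  exact key1
end
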